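/- With notation as above (S/R finite Galois with group G, u ∈ Z¹(G, Aut_S(g⊗S)), û the lifted cocycle in Z¹(G, Aut_k(ĝ_S))), the fixed-point algebra L_û = { x ∈ ĝ_S : û_g(ᵍx) = x for all g ∈ G } projects onto the descended algebra L_u = { x ∈ g⊗S : u_g(ᵍx) = x for all g ∈ G }: the restriction of the projection π : ĝ_S → g⊗S maps L_û surjectively onto L_u, with central kernel, so L_û is a central extension of L_u. -/

import Mathlib

open scoped TensorProduct

/-- The subspace `dS ⊆ Ω_{S/k}` of exact differentials, as a `k`-submodule. -/
noncomputable def exactDifferentials (k S : Type*) [Field k] [CommRing S]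
    [Algebra k S] : Submodule k (Ω[S⁄k]) :=
  LinearMap.range ((KaehlerDifferential.D k S : S →ₗ[k] Ω[S⁄k]))

lemma bracketSpan_eq_top (R L : Type*) [CommRing R] [LieRing L] [LieAlgebra R L]
    [LieAlgebra.IsSimple R L] :
    Submodule.span R {m : L | ∃ a b : L, m = ⁅a, b⁆} = ⊤ := by
  let I : LieIdeal R L :=
    { toSubmodule := Submodule.span R {m : L | ∃ a b : L, m = ⁅a, b⁆}
      lie_mem := fun {x m} _ => Submodule.subset_span ⟨x, m, rfl⟩ }
  rcases LieAlgebra.IsSimple.eq_bot_or_eq_top I with h | h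
  · exfalso
    apply LieAlgebra.IsSimple.non_abelian (R := R) (L := L)
    constructor
    intro x m
    have hx : ⁅x, m⁆ ∈ I := Submodule.subset_span ⟨x, m, rfl⟩
    rw [h, LieSubmodule.mem_bot] at hx
    exact hx
  · have := congrArg (LieSubmodule.toSubmodule) h
    exact this

set_option maxHeartbeats 1000000 in
/-- With `S/R` finite Galois with group `G`, `u ∈ Z¹(G, Aut_S(𝔤⊗S))`
and `û` the lifted cocycle, the fixed-point algebra
`L_û = {w ∈ ĝ_S : û_g(ᵍw) = w ∀g}` projects onto the descended algebra
`L_u = {v ∈ 𝔤⊗S : u_g(ᵍv) = v ∀g}` under the projection `π : ĝ_S → 𝔤⊗S`, with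
central kernel; so `L_û` is a central extension of `L_u`. -/
theorem statement13 (k : Type*) [Field k] [CharZero k]
    (𝔤 : Type*) [LieRing 𝔤] [LieAlgebra k 𝔤] [FiniteDimensional k 𝔤]
    [LieAlgebra.IsSimple k 𝔤]
    (hsplit : ∃ H : LieSubalgebra k 𝔤, H.IsCartanSubalgebra ∧
      LieModule.IsTriangularizable k H 𝔤)
    (R S : Type*) [CommRing R] [Algebra k R] [CommRing S] [Algebra k S]
    [Algebra R S] [IsScalarTower k R S]
    (G : Type*) [Group G] [Fintype G]
    (ρ : G →* (S ≃ₐ[R] S))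
    (hfaithful : Function.Injective ρ)
    (hfixed : ∀ s : S, (∀ g : G, ρ g s = s) → ∃ r : R, algebraMap R S r = s)
    -- the Kassel cocycle on 𝔤 ⊗ S
    (P : (S ⊗[k] 𝔤) →ₗ[k] (S ⊗[k] 𝔤) →ₗ[k]
      (Ω[S⁄k] ⧸ exactDifferentials k S))
    (hP : ∀ (a b : S) (x y : 𝔤),
      P (a ⊗ₜ x) (b ⊗ₜ y) = killingForm k 𝔤 x y •
        (exactDifferentials k S).mkQ (a • KaehlerDifferential.D k S b))
    -- the natural actions of G on 𝔤 ⊗ S and on Ω_S/dS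
    (A : G → ((S ⊗[k] 𝔤) ≃ₗ[k] (S ⊗[k] 𝔤)))
    (hA : ∀ (g : G) (a : S) (x : 𝔤), A g (a ⊗ₜ x) = ρ g a ⊗ₜ x)
    (AΩ : G → ((Ω[S⁄k] ⧸ exactDifferentials k S) ≃ₗ[k]
      (Ω[S⁄k] ⧸ exactDifferentials k S)))
    (hAΩ : ∀ (g : G) (a b : S),
      AΩ g ((exactDifferentials k S).mkQ (a • KaehlerDifferential.D k S b))
        = (exactDifferentials k S).mkQ (ρ g a • KaehlerDifferential.D k S (ρ g b)))
    -- the cocycle u ∈ Z¹(G, Aut_S(𝔤⊗S))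
    (u : G → ((S ⊗[k] 𝔤) ≃ₗ⁅S⁆ (S ⊗[k] 𝔤)))
    (hu : ∀ (g₁ g₂ : G) (v : S ⊗[k] 𝔤),
      u (g₁ * g₂) v = u g₁ (A g₁ (u g₂ (A g₁⁻¹ v))))
    -- the lifts û_g of the u_g to automorphisms of ĝ_S = (𝔤⊗S) ⊕ Ω_S/dS
    (hatu : G → (((S ⊗[k] 𝔤) × (Ω[S⁄k] ⧸ exactDifferentials k S)) ≃ₗ[k]
      ((S ⊗[k] 𝔤) × (Ω[S⁄k] ⧸ exactDifferentials k S))))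
    (hhom : ∀ (g : G) (w w' : (S ⊗[k] 𝔤) × (Ω[S⁄k] ⧸ exactDifferentials k S)),
      hatu g (⁅w.1, w'.1⁆, P w.1 w'.1)
        = (⁅(hatu g w).1, (hatu g w').1⁆, P (hatu g w).1 (hatu g w').1))
    (hlift : ∀ (g : G) (w : (S ⊗[k] 𝔤) × (Ω[S⁄k] ⧸ exactDifferentials k S)),
      (hatu g w).1 = u g w.1) :
    -- conclusion: π(L_û) ⊆ L_u, π : L_û → L_u is surjective, and its kernel
    -- is central in L_û
    (∀ w : (S ⊗[k] 𝔤) × (Ω[S⁄k] ⧸ exactDifferentials k S),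
      (∀ g : G, hatu g (A g w.1, AΩ g w.2) = w) →
      (∀ g : G, u g (A g w.1) = w.1)) ∧
    (∀ v : S ⊗[k] 𝔤, (∀ g : G, u g (A g v) = v) →
      ∃ z : Ω[S⁄k] ⧸ exactDifferentials k S,
        ∀ g : G, hatu g (A g v, AΩ g z) = (v, z)) ∧
    (∀ w : (S ⊗[k] 𝔤) × (Ω[S⁄k] ⧸ exactDifferentials k S),
      (∀ g : G, hatu g (A g w.1, AΩ g w.2) = w) → w.1 = 0 →
      ∀ w' : (S ⊗[k] 𝔤) × (Ω[S⁄k] ⧸ exactDifferentials k S),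
        (∀ g : G, hatu g (A g w'.1, AΩ g w'.2) = w') →
        (⁅w.1, w'.1⁆, P w.1 w'.1)
          = ((0 : S ⊗[k] 𝔤), (0 : Ω[S⁄k] ⧸ exactDifferentials k S))) := by
    classical
  -- `A` is multiplicative
  have hA_mul : ∀ (g h : G) (z : S ⊗[k] 𝔤), A g (A h z) = A (g * h) z := by
    intro g h z
    induction z using TensorProduct.induction_on with
    | zero => simp
    | tmul a x => rw [hA h a x, hA g (ρ h a) x, hA (g * h) a x, map_mul, AlgEquiv.mul_apply]
    | add z₁ z₂ h₁ h₂ => rw [map_add, map_add, h₁, h₂, map_add]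
  -- `A g` is a Lie-ring homomorphism
  have hA_lie : ∀ (g : G) (x y : S ⊗[k] 𝔤), A g ⁅x, y⁆ = ⁅A g x, A g y⁆ := by
    intro g x y
    induction x using TensorProduct.induction_on with
    | zero => simp
    | add x₁ x₂ h₁ h₂ => rw [add_lie, map_add, h₁, h₂, map_add, add_lie]
    | tmul a x =>
      induction y using TensorProduct.induction_on with
      | zero => simp
      | add y₁ y₂ h₁ h₂ => rw [lie_add, map_add, h₁, h₂, map_add, lie_add]
      | tmul b y =>
        rw [LieAlgebra.ExtendScalars.bracket_tmul, hA, hA, hA,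
          LieAlgebra.ExtendScalars.bracket_tmul, map_mul]
  -- `AΩ g` intertwines `P` with the `A g`-twist
  have hAΩ_P : ∀ (g : G) (x y : S ⊗[k] 𝔤), AΩ g (P x y) = P (A g x) (A g y) := by
    intro g x y
    induction x using TensorProduct.induction_on with
    | zero =>
      rw [P.map_zero, LinearMap.zero_apply, (AΩ g).map_zero, (A g).map_zero,
        P.map_zero, LinearMap.zero_apply]
    | add x₁ x₂ h₁ h₂ =>
      rw [P.map_add, LinearMap.add_apply, (AΩ g).map_add, h₁, h₂, (A g).map_add,
        P.map_add, LinearMap.add_apply]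
    | tmul a x =>
      induction y using TensorProduct.induction_on with
      | zero =>
        rw [(P _).map_zero, (AΩ g).map_zero, (A g).map_zero, (P _).map_zero]
      | add y₁ y₂ h₁ h₂ =>
        rw [(P _).map_add, (AΩ g).map_add, h₁, h₂, (A g).map_add, (P _).map_add]
      | tmul b y => rw [hP, (AΩ g).map_smul, hAΩ, hA, hA, hP]
  -- the twisted action on the central extension
  set Φ : G → (((S ⊗[k] 𝔤) × (Ω[S⁄k] ⧸ exactDifferentials k S)) →ₗ[k]
      ((S ⊗[k] 𝔤) × (Ω[S⁄k] ⧸ exactDifferentials k S))) :=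
    fun g => (hatu g).toLinearMap ∘ₗ
      LinearMap.prodMap (A g).toLinearMap (AΩ g).toLinearMap with hΦdef
  have hΦ_apply : ∀ (g : G) (w : (S ⊗[k] 𝔤) × (Ω[S⁄k] ⧸ exactDifferentials k S)),
      Φ g w = hatu g (A g w.1, AΩ g w.2) := fun g w => rfl
  -- the multiplicativity of the twisted cocycle
  have hu_mul : ∀ (g₁ g₂ : G) (z : S ⊗[k] 𝔤),
      u g₁ (A g₁ (u g₂ (A g₂ z))) = u (g₁ * g₂) (A (g₁ * g₂) z) := by
    intro g₁ g₂ z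
    rw [hu g₁ g₂ (A (g₁ * g₂) z), hA_mul, inv_mul_cancel_left]
  -- action of `Φ g` on the spanning set
  have hΦT : ∀ (g : G) (x y : S ⊗[k] 𝔤),
      Φ g (⁅x, y⁆, P x y)
        = (⁅u g (A g x), u g (A g y)⁆, P (u g (A g x)) (u g (A g y))) := by
    intro g x y
    rw [hΦ_apply]
    show hatu g (A g ⁅x, y⁆, AΩ g (P x y)) = _
    rw [hA_lie, hAΩ_P]
    have h2 := hhom g (A g x, 0) (A g y, 0)
    have h3 := hlift g (A g x, (0 : Ω[S⁄k] ⧸ exactDifferentials k S))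
    have h4 := hlift g (A g y, (0 : Ω[S⁄k] ⧸ exactDifferentials k S))
    simp only at h2 h3 h4
    rw [h2, h3, h4]
  -- the spanning set
  set T : Set ((S ⊗[k] 𝔤) × (Ω[S⁄k] ⧸ exactDifferentials k S)) :=
    {e | ∃ x y : S ⊗[k] 𝔤, e = (⁅x, y⁆, P x y)} with hTdef
  -- composition law on the span
  have hΦW : ∀ (g₁ g₂ : G) (w : (S ⊗[k] 𝔤) × (Ω[S⁄k] ⧸ exactDifferentials k S)),
      w ∈ Submodule.span k T → Φ g₁ (Φ g₂ w) = Φ (g₁ * g₂) w := by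
    intro g₁ g₂ w hw
    induction hw using Submodule.span_induction with
    | mem e he =>
      obtain ⟨x, y, rfl⟩ := he
      rw [hΦT g₂ x y, hΦT g₁ (u g₂ (A g₂ x)) (u g₂ (A g₂ y)), hΦT (g₁ * g₂) x y,
        hu_mul, hu_mul]
    | zero => simp
    | add x y hx hy ihx ihy => simp only [map_add, ihx, ihy]
    | smul c x hx ihx => simp only [map_smul, ihx]
  -- surjectivity of the first projection from the span
  have hsurj : ∀ v : S ⊗[k] 𝔤, ∃ ω, (v, ω) ∈ Submodule.span k T := by
    have htop : Submodule.map
        (LinearMap.fst k (S ⊗[k] 𝔤) (Ω[S⁄k] ⧸ exactDifferentials k S))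
        (Submodule.span k T) = ⊤ := by
      rw [eq_top_iff, ← TensorProduct.span_tmul_eq_top k S 𝔤, Submodule.span_le]
      rintro t ⟨a, x, rfl⟩
      have hx : x ∈ Submodule.span k {m : 𝔤 | ∃ c d : 𝔤, m = ⁅c, d⁆} := by
        rw [bracketSpan_eq_top]; trivial
      have hle : Submodule.span k {m : 𝔤 | ∃ c d : 𝔤, m = ⁅c, d⁆} ≤
          Submodule.comap (TensorProduct.mk k S 𝔤 a)
            (Submodule.map
              (LinearMap.fst k (S ⊗[k] 𝔤) (Ω[S⁄k] ⧸ exactDifferentials k S))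
              (Submodule.span k T)) := by
        rw [Submodule.span_le]
        rintro m ⟨c, d, rfl⟩
        refine ⟨(⁅a ⊗ₜ[k] c, (1 : S) ⊗ₜ[k] d⁆, P (a ⊗ₜ[k] c) ((1 : S) ⊗ₜ[k] d)),
          Submodule.subset_span ⟨a ⊗ₜ[k] c, (1 : S) ⊗ₜ[k] d, rfl⟩, ?_⟩
        show ⁅a ⊗ₜ[k] c, (1 : S) ⊗ₜ[k] d⁆ = a ⊗ₜ[k] ⁅c, d⁆
        rw [LieAlgebra.ExtendScalars.bracket_tmul, mul_one]
      exact hle hx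
    intro v
    have hv : v ∈ Submodule.map
        (LinearMap.fst k (S ⊗[k] 𝔤) (Ω[S⁄k] ⧸ exactDifferentials k S))
        (Submodule.span k T) := by rw [htop]; trivial
    obtain ⟨w, hw, hw1⟩ := hv
    exact ⟨w.2, by rw [← hw1]; exact hw⟩
  refine ⟨?_, ?_, ?_⟩
  · -- π maps L_û into L_u
    intro w hw g
    have h1 := hlift g (A g w.1, AΩ g w.2)
    rw [hw g] at h1
    exact h1.symm
  · -- surjectivity of π : L_û → L_u
    intro v hv
    obtain ⟨ω₀, hω₀⟩ := hsurj v
    have hn : (Fintype.card G : k) ≠ 0 := Nat.cast_ne_zero.mpr Fintype.card_ne_zero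
    set wbar : (S ⊗[k] 𝔤) × (Ω[S⁄k] ⧸ exactDifferentials k S) :=
      (Fintype.card G : k)⁻¹ • ∑ g : G, Φ g (v, ω₀) with hwbar
    have hfst : ∀ g : G, (Φ g (v, ω₀)).1 = v := by
      intro g
      rw [hΦ_apply]
      have := hlift g (A g v, AΩ g ω₀)
      simp only at this
      rw [this]
      exact hv g
    have hwbar1 : wbar.1 = v := by
      rw [hwbar]
      have : (∑ g : G, Φ g (v, ω₀)).1 = ∑ g : G, (Φ g (v, ω₀)).1 := by
        exact Prod.fst_sum
      rw [Prod.smul_fst, this, Finset.sum_congr rfl (fun g _ => hfst g),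
        Finset.sum_const, Finset.card_univ, ← Nat.cast_smul_eq_nsmul k, smul_smul,
        inv_mul_cancel₀ hn, one_smul]
    have hfix : ∀ g : G, Φ g wbar = wbar := by
      intro g
      rw [hwbar, map_smul, map_sum]
      congr 1
      calc ∑ h : G, Φ g (Φ h (v, ω₀))
          = ∑ h : G, Φ (g * h) (v, ω₀) :=
            Finset.sum_congr rfl fun h _ => hΦW g h _ hω₀
        _ = ∑ h : G, Φ h (v, ω₀) :=
            Fintype.sum_equiv (Equiv.mulLeft g) _ _ (fun h => rfl)
    refine ⟨wbar.2, fun g => ?_⟩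
    have h2 : ((v, wbar.2) : (S ⊗[k] 𝔤) × (Ω[S⁄k] ⧸ exactDifferentials k S))
        = wbar := by rw [← hwbar1]
    have h3 := hfix g
    rw [← h2, hΦ_apply] at h3
    exact h3
  · -- the kernel is central
    intro w _ h1 w' _
    rw [h1]
    simp
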